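/- Let G be a commutative cancellative semigroup of uncountable cardinality κ, let θ ≤ κ be a cardinal, let c : G → θ be a colouring, and let δ < θ. Then the following are equivalent: (1) for all X, Y ⊆ G with |X| = |Y| = κ, there exist x ∈ X and y ∈ Y with c(x + y) = δ; (2) for every integer n ≥ 2 and all X₁, …, Xₙ ⊆ G each of cardinality κ, there exist x₁ ∈ X₁, …, xₙ ∈ Xₙ with c(x₁ + ⋯ + xₙ) = δ. -/

import Mathlib

open Cardinal

/-- Sum of `n+1` elements of an additive commutative semigroup. -/
def sgSum {G : Type*} [AddCommSemigroup G] : (n : ℕ) → (Fin (n + 1) → G) → G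
  | 0, x => x 0
  | n + 1, x => sgSum n (fun i => x i.castSucc) + x (Fin.last (n + 1))

lemma sgSum_combine {G : Type*} [AddCommSemigroup G] : ∀ (m : ℕ) (x : Fin (m + 2) → G),
    sgSum (m + 1) x = sgSum m (Fin.cases (x 0 + x 1) (fun i => x i.succ.succ))
  | 0, x => by
    simp [sgSum]
  | m + 1, x => by
    rw [show sgSum (m + 2) x = sgSum (m + 1) (fun i => x i.castSucc) + x (Fin.last (m + 2)) from rfl,
      sgSum_combine m (fun i => x i.castSucc)]
    rw [show sgSum (m + 1) (Fin.cases (x 0 + x 1) (fun i => x i.succ.succ))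
        = sgSum m (fun i => (Fin.cases (x 0 + x 1) (fun i => x i.succ.succ) : Fin (m+2) → G) i.castSucc)
          + Fin.cases (x 0 + x 1) (fun i => x i.succ.succ) (Fin.last (m + 1)) from rfl]
    congr 1
    · congr 1
      funext i
      induction i using Fin.cases with
      | zero => rfl
      | succ j => rfl


theorem stmt_11 {G : Type} [AddCommSemigroup G]
    (hcancel : ∀ a b c : G, a + c = b + c → a = b)
    (hG : ℵ₀ < Cardinal.mk G) (θ : Cardinal.{0}) (hθ : θ ≤ Cardinal.mk G)
    (c : G → θ.ord.ToType) (δ : θ.ord.ToType) :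
    -- (1) sums of two elements, one from each of two κ-sized sets
    ((∀ X Y : Set G, Cardinal.mk X = Cardinal.mk G → Cardinal.mk Y = Cardinal.mk G →
        ∃ x ∈ X, ∃ y ∈ Y, c (x + y) = δ) ↔
      -- (2) for every n ≥ 2 (here `n+2`), sums of `n+2` elements, one from each set
      (∀ (n : ℕ) (X : Fin (n + 2) → Set G),
        (∀ i, Cardinal.mk (X i) = Cardinal.mk G) →
        ∃ x : Fin (n + 2) → G, (∀ i, x i ∈ X i) ∧ c (sgSum (n + 1) x) = δ)) := by
  constructor
  · intro h1
    intro n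
    induction n with
    | zero =>
      intro X hX
      obtain ⟨x, hx, y, hy, hc⟩ := h1 (X 0) (X 1) (hX 0) (hX 1)
      refine ⟨![x, y], ?_, ?_⟩
      · intro i
        fin_cases i <;> simpa using ‹_›
      · simpa [sgSum] using hc
    | succ n ih =>
      intro X hX
      -- X 1 is nonempty
      have hne : Cardinal.mk (X 1) ≠ 0 := by
        rw [hX 1]; exact (Cardinal.aleph0_pos.trans hG).ne'
      obtain ⟨⟨b, hb⟩⟩ := Cardinal.mk_ne_zero_iff.mp hne
      set X' : Fin (n + 2) → Set G :=
        Fin.cases ((· + b) '' (X 0)) (fun i => X i.succ.succ) with hX'def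
      have hX' : ∀ i, Cardinal.mk (X' i) = Cardinal.mk G := by
        intro i
        induction i using Fin.cases with
        | zero =>
          have hinj : Function.Injective (· + b) := fun a a' hab => hcancel a a' b hab
          have : Cardinal.mk ((· + b) '' (X 0)) = Cardinal.mk (X 0) :=
            Cardinal.mk_image_eq hinj
          simpa [hX'def] using this.trans (hX 0)
        | succ j => simpa [hX'def] using hX j.succ.succ
      obtain ⟨x', hx'mem, hx'c⟩ := ih X' hX'
      have h0 : x' 0 ∈ X' 0 := hx'mem 0
      rw [show X' 0 = (· + b) '' (X 0) from rfl] at h0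
      obtain ⟨a, ha, hab⟩ := h0
      set x : Fin (n + 3) → G := Fin.cases a (Fin.cases b (fun i => x' i.succ)) with hxdef
      refine ⟨x, ?_, ?_⟩
      · intro i
        induction i using Fin.cases with
        | zero => simpa [hxdef] using ha
        | succ j =>
          induction j using Fin.cases with
          | zero => exact hb
          | succ k =>
            have := hx'mem k.succ
            simpa [hxdef, hX'def] using this
      · rw [sgSum_combine]
        have hfun : (Fin.cases (x 0 + x 1) (fun i => x i.succ.succ) : Fin (n + 2) → G) = x' := by
          funext i
          induction i using Fin.cases with
          | zero => exact hab
          | succ j => rfl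
        rw [hfun]
        exact hx'c
  · intro h2 X Y hXc hYc
    obtain ⟨x, hx, hc⟩ := h2 0 ![X, Y] (by intro i; fin_cases i <;> simpa using ‹_›)
    refine ⟨x 0, by simpa using hx 0, x 1, by simpa using hx 1, ?_⟩
    simpa [sgSum] using hc
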